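/- For every α ∈ (0,1), the function f(y) := α·y^{1−α} is an admissible martingale calibrator. In particular, for every probability space (Ω, F, P) with filtration (F_n)_{n∈ℕ} and every test supermartingale (X_n, F_n), E[α·(X*_∞)^{1−α}] ≤ 1, where X*_∞ := sup_{n∈ℕ} max(X_n, 1), and ∫₀¹ α·(1/x)^{1−α} dx = 1. -/

import Mathlib

open MeasureTheory ENNReal Filter Topology

private lemma calib_integral {α : ℝ} (hα : α ∈ Set.Ioo (0:ℝ) 1) :
    ∫⁻ x in Set.Ioc (0 : ℝ) 1, ENNReal.ofReal (α * (x⁻¹) ^ (1 - α)) = 1 := by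
  obtain ⟨hα0, hα1⟩ := hα
  have hcong : ∀ x ∈ Set.Ioc (0:ℝ) 1,
      ENNReal.ofReal (α * (x⁻¹) ^ (1 - α)) = ENNReal.ofReal (α * x ^ (α - 1)) := by
    intro x hx
    rw [← Real.rpow_neg_one x, ← Real.rpow_mul hx.1.le]
    ring_nf
  rw [setLIntegral_congr_fun measurableSet_Ioc hcong]
  have hint : IntegrableOn (fun x : ℝ => α * x ^ (α - 1)) (Set.Ioc 0 1) :=
    ((intervalIntegral.intervalIntegrable_rpow' (a := 0) (b := 1)
      (r := α - 1) (by linarith)).1).const_mul α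
  rw [← ofReal_integral_eq_lintegral_ofReal hint]
  · have : ∫ x in Set.Ioc (0:ℝ) 1, α * x ^ (α - 1) = α * ∫ x in (0:ℝ)..1, x ^ (α - 1) := by
      rw [intervalIntegral.integral_of_le zero_le_one, integral_const_mul]
    rw [this, integral_rpow (Or.inl (by linarith))]
    norm_num
    rw [Real.zero_rpow hα0.ne']
    field_simp
    norm_num
  · rw [EventuallyLE, ae_restrict_iff' measurableSet_Ioc]
    exact ae_of_all _ fun x hx => mul_nonneg hα0.le (Real.rpow_nonneg hx.1.le _)

private lemma ville {Ω : Type} {m : MeasurableSpace Ω} {P : Measure Ω}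
    [IsProbabilityMeasure P] {ℱ : Filtration ℕ m} {X : ℕ → Ω → ℝ}
    (hX : Supermartingale X ℱ P) (hnn : ∀ n, 0 ≤ᵐ[P] X n)
    (h0 : ∫ ω, X 0 ω ∂P ≤ 1) {s : ℝ} (hs : 1 ≤ s) :
    P {ω | ∃ n, s ≤ X n ω} ≤ ENNReal.ofReal s⁻¹ := by
  have hs0 : (0:ℝ) < s := lt_of_lt_of_le one_pos hs
  -- finite horizon bound
  have key : ∀ N : ℕ, P {ω | ∃ k ≤ N, s ≤ X k ω} ≤ ENNReal.ofReal s⁻¹ := by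
    intro N
    set A := {ω | ∃ k ≤ N, s ≤ X k ω} with hA
    have hXm : ∀ k, Measurable (X k) := fun k =>
      (hX.stronglyAdapted k).measurable.le (ℱ.le k)
    have hAm : MeasurableSet A := by
      have : A = ⋃ k ∈ Finset.range (N+1), {ω | s ≤ X k ω} := by
        ext ω; simp [hA, Nat.lt_succ_iff]
      rw [this]
      exact MeasurableSet.biUnion (Finset.range (N+1)).countable_toSet
        fun k _ => measurableSet_le measurable_const (hXm k)
    set τ := fun ω => ((hittingBtwn X (Set.Ici s) 0 N ω : ℕ) : ℕ∞) with hτdef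
    have hτ : IsStoppingTime ℱ τ := hittingBtwn_isStoppingTime hX.stronglyAdapted.adapted measurableSet_Ici
    have hτle : ∀ ω, τ ω ≤ N := fun ω => by
      simp only [τ]; exact_mod_cast hittingBtwn_le (u := X) (s := Set.Ici s) (n := 0) (m := N) ω
    have hintSV : Integrable (stoppedValue X τ) P :=
      integrable_stoppedValue ℕ hτ hX.integrable hτle
    -- E[stoppedValue] ≤ E[X 0]
    have hEV : ∫ ω, stoppedValue X τ ω ∂P ≤ ∫ ω, X 0 ω ∂P := by
      have := (hX.neg).expected_stoppedValue_mono (isStoppingTime_const ℱ 0) hτ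
        (fun ω => by simp only [τ]; exact WithTop.coe_le_coe.2 (Nat.zero_le _)) hτle
      simp only [stoppedValue_const] at this
      have hneg : ∀ ω, stoppedValue (-X) τ ω = - stoppedValue X τ ω := fun ω => rfl
      simp only [hneg, Pi.neg_apply, integral_neg, neg_le_neg_iff] at this
      exact this
    -- on A, s ≤ stoppedValue
    have hge : ∀ ω ∈ A, s ≤ stoppedValue X τ ω := by
      intro ω hω
      obtain ⟨k, hk, hsk⟩ := hω
      refine stoppedValue_hittingBtwn_mem ?_
      exact ⟨k, by simpa using hk, hsk⟩
    -- stoppedValue nonneg a.e.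
    have hsvnn : 0 ≤ᵐ[P] stoppedValue X τ := by
      have : ∀ᵐ ω ∂P, ∀ n, 0 ≤ X n ω := (ae_all_iff).mpr hnn
      filter_upwards [this] with ω hω
      exact hω _
    have h1 : s * (P A).toReal ≤ ∫ ω in A, stoppedValue X τ ω ∂P :=
      by have := setIntegral_ge_of_const_le hAm (measure_ne_top _ _) hge hintSV.integrableOn
         simpa [Measure.real, smul_eq_mul, mul_comm] using this
    have h2 : ∫ ω in A, stoppedValue X τ ω ∂P ≤ ∫ ω, stoppedValue X τ ω ∂P :=
      setIntegral_le_integral hintSV hsvnn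
    have h3 : s * (P A).toReal ≤ 1 := le_trans h1 (le_trans h2 (le_trans hEV h0))
    have h4 : (P A).toReal ≤ s⁻¹ := by
      rw [← one_div]
      rw [le_div_iff₀ hs0]
      linarith
    rw [← ENNReal.ofReal_toReal (measure_ne_top P A)]
    exact ENNReal.ofReal_le_ofReal h4
  -- pass to the limit
  have hunion : {ω | ∃ n, s ≤ X n ω} = ⋃ N, {ω | ∃ k ≤ N, s ≤ X k ω} := by
    ext ω; constructor
    · rintro ⟨n, hn⟩; exact Set.mem_iUnion.2 ⟨n, n, le_rfl, hn⟩
    · rintro h; obtain ⟨N, k, _, hk⟩ := Set.mem_iUnion.1 h; exact ⟨k, hk⟩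
  rw [hunion]
  have hmono : Monotone fun N => {ω | ∃ k ≤ N, s ≤ X k ω} := by
    intro N M hNM ω ⟨k, hk, hks⟩
    exact ⟨k, hk.trans hNM, hks⟩
  rw [hmono.directed_le.measure_iUnion]
  exact iSup_le key


private lemma calib_bound {α : ℝ} (hα : α ∈ Set.Ioo (0:ℝ) 1)
    (Ω : Type) (m : MeasurableSpace Ω) (P : Measure Ω)
    (hP : IsProbabilityMeasure P) (ℱ : Filtration ℕ m) (X : ℕ → Ω → ℝ)
    (hX : Supermartingale X ℱ P) (hnn : ∀ n, 0 ≤ᵐ[P] X n)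
    (h0 : ∫ ω, X 0 ω ∂P ≤ 1) :
    ∫⁻ ω, ENNReal.ofReal (α * (⨆ n, max (X n ω) 1) ^ (1 - α)) ∂P ≤ 1 := by
  obtain ⟨hα0, hα1⟩ := hα
  set p : ℝ := (1 - α)⁻¹ with hp
  have h1α : (0:ℝ) < 1 - α := by linarith
  have hp1 : 1 < p := (one_lt_inv_iff₀).2 ⟨h1α, by linarith⟩
  set Y : Ω → ℝ := fun ω => ⨆ n, max (X n ω) 1 with hY
  have hYnn : ∀ ω, 0 ≤ Y ω := fun ω =>
    Real.iSup_nonneg fun n => le_trans zero_le_one (le_max_right _ _)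
  have hXm : ∀ k, Measurable (X k) := fun k => (hX.stronglyAdapted k).measurable.le (ℱ.le k)
  have hYm : Measurable Y := Measurable.iSup fun n => (hXm n).max measurable_const
  have hfm : AEMeasurable (fun ω => α * Y ω ^ (1 - α)) P :=
    (((Real.continuous_rpow_const h1α.le).measurable.comp hYm).const_mul α).aemeasurable
  have hfnn : 0 ≤ᵐ[P] fun ω => α * Y ω ^ (1 - α) :=
    ae_of_all _ fun ω => mul_nonneg hα0.le (Real.rpow_nonneg (hYnn ω) _)
  rw [lintegral_eq_lintegral_meas_lt P hfnn hfm]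
  -- bound the tail probability
  set g : ℝ → ℝ≥0∞ := fun t => (Set.Ioc 0 α).indicator (fun _ => 1) t
    + (Set.Ioi α).indicator (fun t => ENNReal.ofReal ((α / t) ^ p)) t with hg
  have hbound : ∀ t ∈ Set.Ioi (0:ℝ), P {ω | t < α * Y ω ^ (1 - α)} ≤ g t := by
    intro t ht
    rw [Set.mem_Ioi] at ht
    rcases le_or_gt t α with htα | htα
    · have hgt : (1:ℝ≥0∞) ≤ g t := by
        simp only [hg, Set.indicator_apply, Set.mem_Ioc, Set.mem_Ioi]
        simp [ht, htα]
      exact le_trans prob_le_one hgt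
    · set s : ℝ := (t / α) ^ p with hs
      have htα1 : 1 < t / α := (one_lt_div hα0).2 htα
      have hs1 : 1 < s := Real.one_lt_rpow_iff_of_pos (by linarith) |>.2
        (Or.inl ⟨htα1, by linarith⟩)
      have hsub : {ω | t < α * Y ω ^ (1 - α)} ⊆ {ω | ∃ n, s ≤ X n ω} := by
        intro ω hω
        have hYgt : s < Y ω := by
          by_contra hcon
          push_neg at hcon
          have h1 : Y ω ^ (1 - α) ≤ s ^ (1 - α) :=
            Real.rpow_le_rpow (hYnn ω) hcon h1α.le
          have h2 : s ^ (1 - α) = t / α := by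
            rw [hs, ← Real.rpow_mul (div_pos ht hα0).le, hp,
              inv_mul_cancel₀ h1α.ne', Real.rpow_one]
          rw [h2] at h1
          have : α * Y ω ^ (1 - α) ≤ t := by
            rw [mul_comm]
            exact (le_div_iff₀ hα0).1 h1
          exact absurd hω (not_lt.2 this)
        obtain ⟨n, hn⟩ := exists_lt_of_lt_ciSup hYgt
        rcases max_cases (X n ω) 1 with ⟨heq, _⟩ | ⟨heq, _⟩
        · exact ⟨n, (heq ▸ hn).le⟩
        · exact absurd (heq ▸ hn) (not_lt.2 hs1.le)
      have hville := ville hX hnn h0 hs1.le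
      have hsinv : s⁻¹ = (α / t) ^ p := by
        rw [hs, ← Real.inv_rpow (div_pos ht hα0).le, inv_div]
      have hgt : ENNReal.ofReal s⁻¹ ≤ g t := by
        simp only [hg, Set.indicator_apply, Set.mem_Ioc, Set.mem_Ioi]
        simp [htα, not_le.2 htα, hsinv]
      exact le_trans (measure_mono hsub) (le_trans hville hgt)
  refine le_trans (setLIntegral_mono' measurableSet_Ioi hbound) ?_
  -- compute ∫ g over Ioi 0
  have hI1 : ∫⁻ t in Set.Ioi (0:ℝ), (Set.Ioc 0 α).indicator (fun _ => (1:ℝ≥0∞)) t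
      = ENNReal.ofReal α := by
    rw [lintegral_indicator measurableSet_Ioc, Measure.restrict_restrict measurableSet_Ioc]
    have h1 : Set.Ioc (0:ℝ) α ∩ Set.Ioi 0 = Set.Ioc 0 α :=
      Set.inter_eq_left.2 fun x hx => hx.1
    rw [h1, setLIntegral_one, Real.volume_Ioc]
    norm_num
  have hI2 : ∫⁻ t in Set.Ioi (0:ℝ),
      (Set.Ioi α).indicator (fun t => ENNReal.ofReal ((α / t) ^ p)) t
      = ENNReal.ofReal (1 - α) := by
    rw [lintegral_indicator measurableSet_Ioi, Measure.restrict_restrict measurableSet_Ioi]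
    have h1 : Set.Ioi α ∩ Set.Ioi 0 = Set.Ioi α :=
      Set.inter_eq_left.2 fun x hx => lt_trans hα0 hx
    rw [h1]
    have hcong : ∀ t ∈ Set.Ioi α, ENNReal.ofReal ((α / t) ^ p)
        = ENNReal.ofReal (α ^ p) * ENNReal.ofReal (t ^ (-p)) := by
      intro t ht
      have ht0 : (0:ℝ) < t := lt_trans hα0 ht
      rw [Real.div_rpow hα0.le ht0.le, Real.rpow_neg ht0.le,
        ← ENNReal.ofReal_mul (Real.rpow_nonneg hα0.le _), div_eq_mul_inv]
    rw [setLIntegral_congr_fun measurableSet_Ioi hcong,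
      lintegral_const_mul' _ _ ENNReal.ofReal_ne_top]
    have hintOn : IntegrableOn (fun t : ℝ => t ^ (-p)) (Set.Ioi α) :=
      integrableOn_Ioi_rpow_of_lt (by linarith) hα0
    have hnn2 : 0 ≤ᵐ[volume.restrict (Set.Ioi α)] fun t : ℝ => t ^ (-p) := by
      rw [EventuallyLE, ae_restrict_iff' measurableSet_Ioi]
      exact ae_of_all _ fun t ht => Real.rpow_nonneg (lt_trans hα0 ht).le _
    rw [← ofReal_integral_eq_lintegral_ofReal hintOn hnn2,
      integral_Ioi_rpow_of_lt (by linarith) hα0,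
      ← ENNReal.ofReal_mul (Real.rpow_nonneg hα0.le _)]
    congr 1
    have e1 : α ^ p * α ^ (-p + 1) = α := by
      rw [← Real.rpow_add hα0]
      norm_num
    have hpm1 : p - 1 = α / (1 - α) := by
      rw [hp]; field_simp; ring
    have e1' : α ^ p * α ^ (-(p - 1)) = α := by
      rw [show -(p - 1) = -p + 1 by ring]; exact e1
    rw [show (-p + 1 : ℝ) = -(p - 1) by ring, div_neg, neg_div, neg_neg,
      mul_div_assoc', e1', hpm1, div_div_eq_mul_div, mul_comm, mul_div_assoc,
      div_self hα0.ne', mul_one]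
  calc ∫⁻ t in Set.Ioi (0:ℝ), g t
      = (∫⁻ t in Set.Ioi (0:ℝ), (Set.Ioc 0 α).indicator (fun _ => (1:ℝ≥0∞)) t)
        + ∫⁻ t in Set.Ioi (0:ℝ),
            (Set.Ioi α).indicator (fun t => ENNReal.ofReal ((α / t) ^ p)) t := by
        rw [hg]
        exact lintegral_add_left (measurable_one.indicator measurableSet_Ioc) _
    _ = ENNReal.ofReal α + ENNReal.ofReal (1 - α) := by rw [hI1, hI2]
    _ = 1 := by
        rw [← ENNReal.ofReal_add hα0.le h1α.le]
        norm_num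
    _ ≤ 1 := le_rfl


private lemma no_dominator {α : ℝ} (hα : α ∈ Set.Ioo (0:ℝ) 1) :
    ¬ ∃ g : ℝ → ℝ,
        MonotoneOn g (Set.Ici (1 : ℝ)) ∧
        (∀ x ∈ Set.Ici (1 : ℝ), 0 ≤ g x) ∧
        (∫⁻ x in Set.Ioc (0 : ℝ) 1, ENNReal.ofReal (g x⁻¹) ≤ 1) ∧
        (∀ x ∈ Set.Ici (1 : ℝ), α * x ^ (1 - α) ≤ g x) ∧
        (∃ x ∈ Set.Ici (1 : ℝ), α * x ^ (1 - α) < g x) := by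
  obtain ⟨hα0, hα1⟩ := hα
  rintro ⟨g, hmono, hnng, hint, hge, x₀, hx₀, hlt⟩
  set f : ℝ → ℝ := fun x => α * x ^ (1 - α) with hf
  set c := g x₀ with hc
  have hx₀0 : (0:ℝ) < x₀ := lt_of_lt_of_le one_pos hx₀
  -- find x₁ > x₀ with f x₁ < c
  have hcf : ContinuousAt f x₀ :=
    (Real.continuousAt_rpow_const x₀ (1 - α) (Or.inl hx₀0.ne')).const_mul α
  have hev : ∀ᶠ x in 𝓝[>] x₀, f x < c :=
    eventually_nhdsWithin_of_eventually_nhds (hcf.eventually_lt continuousAt_const hlt)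
  obtain ⟨x₁, hx₁lt, hx₁⟩ := (hev.and self_mem_nhdsWithin).exists
  have hx₁0 : (0:ℝ) < x₁ := lt_trans hx₀0 hx₁
  set ε := c - f x₁ with hε
  have hεpos : 0 < ε := sub_pos.2 hx₁lt
  set S : Set ℝ := Set.Ioc x₁⁻¹ x₀⁻¹ with hS
  have hSsub : S ⊆ Set.Ioc 0 1 := fun x hx =>
    ⟨lt_trans (inv_pos.2 hx₁0) hx.1, le_trans hx.2 (inv_le_one_of_one_le₀ hx₀)⟩
  have hSm : MeasurableSet S := measurableSet_Ioc
  have hSvol : 0 < volume S := by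
    rw [hS, Real.volume_Ioc]
    exact ENNReal.ofReal_pos.2 (sub_pos.2 (inv_strictAnti₀ hx₀0 hx₁))
  -- pointwise bound
  have hpt : ∀ x ∈ Set.Ioc (0:ℝ) 1,
      ENNReal.ofReal (f x⁻¹) + S.indicator (fun _ => ENNReal.ofReal ε) x
        ≤ ENNReal.ofReal (g x⁻¹) := by
    intro x hx
    have hxinv1 : (1:ℝ) ≤ x⁻¹ := (one_le_inv_iff₀).2 ⟨hx.1, hx.2⟩
    by_cases hxS : x ∈ S
    · rw [Set.indicator_of_mem hxS, ← ENNReal.ofReal_add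
        (mul_nonneg hα0.le (Real.rpow_nonneg (by positivity) _)) hεpos.le]
      apply ENNReal.ofReal_le_ofReal
      have hx₀le : x₀ ≤ x⁻¹ := by
        rw [← inv_inv x₀]
        exact inv_anti₀ hx.1 hxS.2
      have hxlex₁ : x⁻¹ ≤ x₁ := by
        rw [← inv_inv x₁]
        exact inv_anti₀ (inv_pos.2 hx₁0) hxS.1.le
      have h1 : f x⁻¹ ≤ f x₁ :=
        mul_le_mul_of_nonneg_left
          (Real.rpow_le_rpow (by positivity) hxlex₁ (by linarith)) hα0.le
      have h2 : c ≤ g x⁻¹ := hmono hx₀ (le_trans hx₀ hx₀le) hx₀le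
      have h1' : α * x⁻¹ ^ (1 - α) ≤ f x₁ := h1
      linarith [hε, h1', h2]
    · rw [Set.indicator_of_notMem hxS, add_zero]
      exact ENNReal.ofReal_le_ofReal (hge _ hxinv1)
  have hintS : ∫⁻ x in Set.Ioc (0:ℝ) 1, S.indicator (fun _ => ENNReal.ofReal ε) x
      = ENNReal.ofReal ε * volume S := by
    rw [lintegral_indicator hSm, Measure.restrict_restrict hSm,
      Set.inter_eq_left.2 hSsub, setLIntegral_const]
  have hge1 : 1 + ENNReal.ofReal ε * volume S ≤ 1 := by
    calc 1 + ENNReal.ofReal ε * volume S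
        = ∫⁻ x in Set.Ioc (0:ℝ) 1, (ENNReal.ofReal (f x⁻¹)
            + S.indicator (fun _ => ENNReal.ofReal ε) x) := by
          rw [lintegral_add_right _ (measurable_const.indicator hSm),
            calib_integral ⟨hα0, hα1⟩, hintS]
      _ ≤ ∫⁻ x in Set.Ioc (0:ℝ) 1, ENNReal.ofReal (g x⁻¹) := by
          refine lintegral_mono_ae ?_
          rw [ae_restrict_iff' measurableSet_Ioc]
          exact ae_of_all _ hpt
      _ ≤ 1 := hint
  have : (1:ℝ≥0∞) < 1 + ENNReal.ofReal ε * volume S :=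
    ENNReal.lt_add_right one_ne_top
      (mul_ne_zero (ENNReal.ofReal_pos.2 hεpos).ne' hSvol.ne')
  exact absurd (lt_of_lt_of_le this hge1) (lt_irrefl _)

/-- For every `α ∈ (0,1)`, `f(y) = α·y^{1-α}` is an admissible
martingale calibrator: no martingale calibrator strictly dominates it; for every
test supermartingale `(X_n, ℱ_n)` on any probability space,
`E[α·(X*_∞)^{1-α}] ≤ 1` where `X*_∞ := sup_n max(X_n, 1)`; and
`∫₀¹ α·(1/x)^{1-α} dx = 1`. -/
theorem power_function_is_admissible_martingale_calibrator
    (α : ℝ) (hα : α ∈ Set.Ioo (0 : ℝ) 1) :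
    (¬ ∃ g : ℝ → ℝ,
        MonotoneOn g (Set.Ici (1 : ℝ)) ∧
        (∀ x ∈ Set.Ici (1 : ℝ), 0 ≤ g x) ∧
        (∫⁻ x in Set.Ioc (0 : ℝ) 1, ENNReal.ofReal (g x⁻¹) ≤ 1) ∧
        (∀ x ∈ Set.Ici (1 : ℝ), α * x ^ (1 - α) ≤ g x) ∧
        (∃ x ∈ Set.Ici (1 : ℝ), α * x ^ (1 - α) < g x)) ∧
    (∀ (Ω : Type) (m : MeasurableSpace Ω) (P : Measure Ω),
      IsProbabilityMeasure P →
      ∀ (ℱ : Filtration ℕ m) (X : ℕ → Ω → ℝ),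
      Supermartingale X ℱ P → (∀ n, 0 ≤ᵐ[P] X n) → (∫ ω, X 0 ω ∂P ≤ 1) →
      ∫⁻ ω, ENNReal.ofReal (α * (⨆ n, max (X n ω) 1) ^ (1 - α)) ∂P ≤ 1) ∧
    ∫⁻ x in Set.Ioc (0 : ℝ) 1, ENNReal.ofReal (α * (x⁻¹) ^ (1 - α)) = 1 :=
  ⟨no_dominator hα,
   fun Ω m P hP ℱ X hX hnn h0 => calib_bound hα Ω m P hP ℱ X hX hnn h0,
   calib_integral hα⟩
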